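/- arXiv:2102.02187 — 2 statements merged into one kernel-verified Lean document; each statement's English description precedes it below -/
import Mathlib

section
/- (Coefficient bounds for the two-sender twirl.) Let d₁, d₂ be integers with 2 ≤ d₁ ≤ d₂, and let w: {0,1}² → ℝ≥0 satisfy w_b / d_i ≤ w_{b⊕e_i} ≤ d_i · w_b for every b ∈ {0,1}² and i ∈ {1,2}, where e_i flips the i-th bit (associate d₁ with the first bit and d₂ with the second). If (α₀₀, α₀₁, α₁₀, α₁₁) solves the linear system d₁d₂·([[d₂,1],[1,d₂]] ⊗ [[d₁,1],[1,d₁]])·(α₀₀,α₀₁,α₁₀,α₁₁)ᵀ = d₁²d₂²·(w₀₀, w₀₁, w₁₀, w₁₁)ᵀ, then α_b ≤ (d₂²/(d₂²−1))·w_b for every b ∈ {0,1}². -/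
open scoped Kronecker ComplexOrder
open MeasureTheory Matrix

noncomputable section

namespace QIT

section UnitaryTopology

variable (n : Type*) [Fintype n] [DecidableEq n]

instance : MeasurableSpace (Matrix.unitaryGroup n ℂ) := borel _
instance : BorelSpace (Matrix.unitaryGroup n ℂ) := ⟨rfl⟩

instance : IsTopologicalGroup (Matrix.unitaryGroup n ℂ) where
  continuous_mul := by
    apply Continuous.subtype_mk
    exact Continuous.matrix_mul (continuous_subtype_val.comp continuous_fst)
      (continuous_subtype_val.comp continuous_snd)
  continuous_inv := by
    have h : Continuous fun U : Matrix.unitaryGroup n ℂ => star U :=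
      Continuous.subtype_mk (continuous_star.comp continuous_subtype_val) _
    simpa [← Unitary.star_eq_inv] using h

instance : CompactSpace (Matrix.unitaryGroup n ℂ) := by
  apply isCompact_iff_compactSpace.mp
  have hclosed : IsClosed ((Matrix.unitaryGroup n ℂ : Set (Matrix n n ℂ))) := by
    have h1 : IsClosed {M : Matrix n n ℂ | star M * M = 1} :=
      isClosed_eq (Continuous.matrix_mul continuous_star continuous_id) continuous_const
    have h2 : IsClosed {M : Matrix n n ℂ | M * star M = 1} :=
      isClosed_eq (Continuous.matrix_mul continuous_id continuous_star) continuous_const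
    have heq : (Matrix.unitaryGroup n ℂ : Set (Matrix n n ℂ))
        = {M | star M * M = 1} ∩ {M | M * star M = 1} := by
      ext M; exact Unitary.mem_iff
    rw [heq]; exact h1.inter h2
  have hsub : (Matrix.unitaryGroup n ℂ : Set (Matrix n n ℂ)) ⊆
      Set.univ.pi fun _ : n => Set.univ.pi fun _ : n => Metric.closedBall (0 : ℂ) 1 := by
    intro U hU i _ j _
    rw [Metric.mem_closedBall, dist_zero_right]
    exact entry_norm_bound_of_unitary hU i j
  exact IsCompact.of_isClosed_subset
    (isCompact_univ_pi fun _ => isCompact_univ_pi fun _ => isCompact_closedBall _ _)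
    hclosed hsub

/-- The Haar probability measure on the unitary group. -/
def haarU : Measure (Matrix.unitaryGroup n ℂ) :=
  Measure.haarMeasure ⟨⟨Set.univ, isCompact_univ⟩, by simp⟩

end UnitaryTopology


section Defs

/-- Entrywise (Bochner) integral of a matrix-valued function. -/
def mInt {G : Type*} [MeasurableSpace G] (mu : Measure G) {m : Type*}
    (f : G → Matrix m m ℂ) : Matrix m m ℂ :=
  fun i j => ∫ U, f U i j ∂mu

/-- Partial trace over the first tensor factor. -/
def ptL {A B : Type*} [Fintype A] (M : Matrix (A × B) (A × B) ℂ) : Matrix B B ℂ :=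
  fun i j => ∑ a, M (a, i) (a, j)

/-- Partial trace over the second tensor factor. -/
def ptR {A B : Type*} [Fintype B] (M : Matrix (A × B) (A × B) ℂ) : Matrix A A ℂ :=
  fun i j => ∑ b, M (i, b) (j, b)

/-- Extension `T ⊗ id` of a superoperator to an additional tensor factor. -/
def matExt {A E R : Type*} (T : Matrix A A ℂ → Matrix E E ℂ)
    (M : Matrix (A × R) (A × R) ℂ) : Matrix (E × R) (E × R) ℂ :=
  fun p q => T (fun a b => M (a, p.2) (b, q.2)) p.1 q.1

/-- Linearity of a superoperator. -/
def IsLinMap {A E : Type*} (T : Matrix A A ℂ → Matrix E E ℂ) : Prop :=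
  ∀ (c : ℂ) (M N : Matrix A A ℂ), T (c • M + N) = c • T M + T N

/-- Complete positivity of a superoperator: it is linear and all its extensions by
finite-dimensional identities preserve positive semidefiniteness. -/
def IsCPMap {A E : Type*} [Fintype A] [Fintype E] (T : Matrix A A ℂ → Matrix E E ℂ) : Prop :=
  IsLinMap T ∧ ∀ (n : ℕ) (M : Matrix (A × Fin n) (A × Fin n) ℂ),
    M.PosSemidef → (matExt T M).PosSemidef

/-- Trace preservation. -/
def IsTPMap {A E : Type*} [Fintype A] [Fintype E] (T : Matrix A A ℂ → Matrix E E ℂ) : Prop :=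
  ∀ M : Matrix A A ℂ, (T M).trace = M.trace

/-- Spectral (Moore–Penrose) real power of a Hermitian matrix: the eigenvalue `λ` is mapped to
`λ ^ r` if `λ ≠ 0`, and to `0` otherwise.  Junk value `0` on non-Hermitian input. -/
def mpow {n : Type*} [Fintype n] [DecidableEq n] (M : Matrix n n ℂ) (r : ℝ) : Matrix n n ℂ :=
  if h : M.IsHermitian then
    (h.eigenvectorUnitary : Matrix n n ℂ) *
      Matrix.diagonal (fun i =>
        Complex.ofReal (if h.eigenvalues i = 0 then (0 : ℝ) else h.eigenvalues i ^ r)) *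
      star (h.eigenvectorUnitary : Matrix n n ℂ)
  else 0

/-- `ρ_δ`: the matrix obtained from a Hermitian matrix by zeroing out a maximal set of
smallest eigenvalues whose sum is at most `δ` (ties between equal eigenvalues broken by a
fixed enumeration of the index type).  Junk value `0` on non-Hermitian input. -/
def dTrunc {n : Type*} [Fintype n] [DecidableEq n] (M : Matrix n n ℂ) (δ : ℝ) :
    Matrix n n ℂ :=
  if h : M.IsHermitian then
    (h.eigenvectorUnitary : Matrix n n ℂ) *
      Matrix.diagonal (fun i =>
        if (∑ j ∈ Finset.univ.filter (fun j =>
              h.eigenvalues j < h.eigenvalues i ∨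
                (h.eigenvalues j = h.eigenvalues i ∧
                  Fintype.equivFin n j ≤ Fintype.equivFin n i)), h.eigenvalues j) ≤ δ
        then (0 : ℂ) else (h.eigenvalues i : ℂ)) *
      star (h.eigenvectorUnitary : Matrix n n ℂ)
  else 0

/-- Squared Schatten 2-norm `‖M‖₂² = Tr[MᴴM]`. -/
def sn2sq {n : Type*} [Fintype n] (M : Matrix n n ℂ) : ℝ := (Matrix.trace (Mᴴ * M)).re

/-- Trace norm `‖M‖₁ = Tr √(MᴴM)`. -/
def traceNorm {n : Type*} [Fintype n] [DecidableEq n] (M : Matrix n n ℂ) : ℝ :=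
  (Matrix.trace (mpow (Mᴴ * M) (1 / 2))).re

/-- The conditioned state `(I ⊗ (ρ^B_δ)^{-1/4}) ρ^{AB} (I ⊗ (ρ^B_δ)^{-1/4})`. -/
def tildeCond {A B : Type*} [Fintype A] [DecidableEq A] [Fintype B] [DecidableEq B]
    (ρ : Matrix (A × B) (A × B) ℂ) (δ : ℝ) : Matrix (A × B) (A × B) ℂ :=
  ((1 : Matrix A A ℂ) ⊗ₖ mpow (dTrunc (ptL ρ) δ) (-(1 / 4))) * ρ *
    ((1 : Matrix A A ℂ) ⊗ₖ mpow (dTrunc (ptL ρ) δ) (-(1 / 4)))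

/-- The δ-tilde conditional 2-entropy `H̃_{2,δ}(A|B)_ρ` of a state on `A ⊗ B`
(conditioning on the second factor). -/
def tildeH2 {A B : Type*} [Fintype A] [DecidableEq A] [Fintype B] [DecidableEq B]
    (ρ : Matrix (A × B) (A × B) ℂ) (δ : ℝ) : ℝ :=
  - Real.logb 2 ((Matrix.trace (tildeCond ρ δ * tildeCond ρ δ)).re)

/-- The unconditional tilde 2-entropy `H̃_2(A)_σ = -log Tr[σ²]`. -/
def h2un {A : Type*} [Fintype A] (σ : Matrix A A ℂ) : ℝ :=
  - Real.logb 2 ((Matrix.trace (σ * σ)).re)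

/-- The max entropy `H_max(A)_σ = 2 log Tr[√σ]`. -/
def hMax {A : Type*} [Fintype A] [DecidableEq A] (σ : Matrix A A ℂ) : ℝ :=
  2 * Real.logb 2 ((Matrix.trace (mpow σ (1 / 2))).re)

/-- The maximally entangled state `Φ^{AA'}`. -/
def maxEnt (A : Type*) [Fintype A] [DecidableEq A] : Matrix (A × A) (A × A) ℂ :=
  fun p q => if p.1 = p.2 ∧ q.1 = q.2 then (Fintype.card A : ℂ)⁻¹ else 0

/-- The swap operator `F^{AA'}`. -/
def swapOp (A : Type*) [DecidableEq A] : Matrix (A × A) (A × A) ℂ :=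
  fun p q => if p.1 = q.2 ∧ p.2 = q.1 then 1 else 0

/-- The Choi state of a superoperator, on `A ⊗ E`. -/
def choi {A E : Type*} [Fintype A] [DecidableEq A]
    (T : Matrix A A ℂ → Matrix E E ℂ) : Matrix (A × E) (A × E) ℂ :=
  fun p q => (Fintype.card A : ℂ)⁻¹ * T (Matrix.single p.1 q.1 1) p.2 q.2

/-- A (mixed) quantum state. -/
def IsState {A : Type*} [Fintype A] (ρ : Matrix A A ℂ) : Prop :=
  ρ.PosSemidef ∧ ρ.trace = 1

/-- A pure quantum state (rank-one projection). -/
def IsPureState {A : Type*} [Fintype A] (ψ : Matrix A A ℂ) : Prop :=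
  ψ.PosSemidef ∧ ψ * ψ = ψ ∧ ψ.trace = 1


/-- The Haar measure on the unitary group is a probability measure. -/
instance {n : Type*} [Fintype n] [DecidableEq n] : IsProbabilityMeasure (haarU n) :=
  ⟨Measure.haarMeasure_self⟩

/-- marginal over the middle factor: `((X × Y) × Z) ↦ (X × Z)`. -/
def m13 {X Y Z : Type*} [Fintype Y] (M : Matrix ((X × Y) × Z) ((X × Y) × Z) ℂ) :
    Matrix (X × Z) (X × Z) ℂ :=
  fun p q => ∑ y, M ((p.1, y), p.2) ((q.1, y), q.2)

/-- marginal over the first of three factors: `((X × Y) × Z) ↦ (Y × Z)`. -/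
def m23 {X Y Z : Type*} [Fintype X] (M : Matrix ((X × Y) × Z) ((X × Y) × Z) ℂ) :
    Matrix (Y × Z) (Y × Z) ℂ :=
  fun p q => ∑ x, M ((x, p.1), p.2) ((x, q.1), q.2)

/-- marginal over the first component of the second factor:
`(X × (Y × Z)) ↦ (X × Z)`. -/
def m2of2 {X Y Z : Type*} [Fintype Y] (M : Matrix (X × (Y × Z)) (X × (Y × Z)) ℂ) :
    Matrix (X × Z) (X × Z) ℂ :=
  fun p q => ∑ y, M (p.1, (y, p.2)) (q.1, (y, q.2))

/-- `(F^{AA'})^b`: the swap operator if `b = true`, the identity otherwise. -/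
def swapPow (A : Type*) [Fintype A] [DecidableEq A] (b : Bool) : Matrix (A × A) (A × A) ℂ :=
  if b then swapOp A else 1

/-- `I_S ⊗ V` for a rectangular matrix `V`. -/
def idTensor {S α β : Type*} [DecidableEq S] (V : Matrix α β ℂ) :
    Matrix (S × α) (S × β) ℂ := fun p q => if p.1 = q.1 then V p.2 q.2 else 0

/-- `Ω^{A'A''} ⊗ Δ^{B'B''}` rearranged as an operator on `(A''⊗B'') ⊗ (A'⊗B')`. -/
def pairState {A A' B B' : Type*} (Ω : Matrix (A' × A) (A' × A) ℂ)
    (Δ : Matrix (B' × B) (B' × B) ℂ) :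
    Matrix ((A × B) × (A' × B')) ((A × B) × (A' × B')) ℂ :=
  fun p q => Ω (p.2.1, p.1.1) (q.2.1, q.1.1) * Δ (p.2.2, p.1.2) (q.2.2, q.1.2)

/-- interleave two bipartite operators on `A⊗X` and `B⊗Y` as an operator on
`(A⊗B) ⊗ (X⊗Y)`. -/
def arrange2 {A B X Y : Type*} (M : Matrix (A × X) (A × X) ℂ) (N : Matrix (B × Y) (B × Y) ℂ) :
    Matrix ((A × B) × (X × Y)) ((A × B) × (X × Y)) ℂ :=
  fun p q => M (p.1.1, p.2.1) (q.1.1, q.2.1) * N (p.1.2, p.2.2) (q.1.2, q.2.2)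

/-- conjugate the first factor of a bipartite operator by a rectangular matrix `U : A → A'`. -/
def encApply {A A' X : Type*} [Fintype A] (U : Matrix A' A ℂ) (M : Matrix (A × X) (A × X) ℂ) :
    Matrix (A' × X) (A' × X) ℂ :=
  fun p q => ∑ a, ∑ a', U p.1 a * M (a, p.2) (a', q.2) * star (U q.1 a')

section Pi

variable {k : ℕ} {a : Fin k → Type*} [∀ i, Fintype (a i)] [∀ i, DecidableEq (a i)]

/-- Tensor product of `k` matrices. -/
def piKron (U : ∀ i, Matrix (a i) (a i) ℂ) : Matrix (∀ i, a i) (∀ i, a i) ℂ :=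
  fun f g => ∏ i, U i (f i) (g i)

/-- merge assignments on the `true` and `false` fibers of a bit string into a full assignment. -/
def bmerge (b : Fin k → Bool) (f : (i : {i // b i = true}) → a i.1)
    (g : (i : {i // b i = false}) → a i.1) (i : Fin k) : a i :=
  if h : b i = true then f ⟨i, h⟩ else g ⟨i, by simpa using h⟩

/-- marginal of an operator on `(⊗ᵢ Aᵢ) ⊗ E` on the subsystem
`(⊗_{i : bᵢ = 1} Aᵢ) ⊗ E` selected by a bit string `b`. -/
def margB {E : Type*} (b : Fin k → Bool)
    (M : Matrix ((∀ i, a i) × E) ((∀ i, a i) × E) ℂ) :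
    Matrix (((i : {i // b i = true}) → a i.1) × E) (((i : {i // b i = true}) → a i.1) × E) ℂ :=
  fun p q => ∑ g : (i : {i // b i = false}) → a i.1,
    M (bmerge b p.1 g, p.2) (bmerge b q.1 g, q.2)

/-- `⊗ᵢ (F^{AᵢAᵢ'})^{bᵢ}` as an operator on `(⊗ᵢAᵢ) ⊗ (⊗ᵢAᵢ')`. -/
def swapProd (b : Fin k → Bool) :
    Matrix ((∀ i, a i) × (∀ i, a i)) ((∀ i, a i) × (∀ i, a i)) ℂ :=
  fun p q => ∏ i, if b i
    then (if p.1 i = q.2 i ∧ p.2 i = q.1 i then (1 : ℂ) else 0)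
    else (if p.1 i = q.1 i ∧ p.2 i = q.2 i then (1 : ℂ) else 0)

end Pi

/-- Tensor product `S ⊗ T` of two superoperators. -/
def tensorSup {α β α' β' : Type*} [Fintype α] [DecidableEq α] [Fintype α'] [DecidableEq α']
    (S : Matrix α α ℂ → Matrix β β ℂ) (T : Matrix α' α' ℂ → Matrix β' β' ℂ)
    (M : Matrix (α × α') (α × α') ℂ) : Matrix (β × β') (β × β') ℂ :=
  fun p q => ∑ x : α, ∑ y : α, ∑ x' : α', ∑ y' : α',
    M (x, x') (y, y') * S (Matrix.single x y 1) p.1 q.1 *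
      T (Matrix.single x' y' 1) p.2 q.2

/-- Hilbert–Schmidt adjoint of a superoperator. -/
def hsAdj {A E : Type*} [Fintype A] [DecidableEq A] [Fintype E]
    (T : Matrix A A ℂ → Matrix E E ℂ) (Y : Matrix E E ℂ) : Matrix A A ℂ :=
  fun x y => star (Matrix.trace (Yᴴ * T (Matrix.single x y 1)))

end Defs

end QIT
/-- Coefficient bounds for the two-sender twirl: if
`(α_b)_{b ∈ {0,1}²}` solves the linear system
`d₁d₂ · Σ_a d₁^{¬(b₁⊕a₁)} d₂^{¬(b₂⊕a₂)} α_a = d₁²d₂² w_b` for weights `w` satisfying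
`w_b/dᵢ ≤ w_{b⊕eᵢ} ≤ dᵢ·w_b`, and `2 ≤ d₁ ≤ d₂`, then `α_b ≤ (d₂²/(d₂²-1))·w_b`. -/
theorem two_sender_twirl_coeff_bounds (d₁ d₂ : ℕ) (hd₁ : 2 ≤ d₁) (hd : d₁ ≤ d₂)
    (w : Bool × Bool → ℝ) (hw0 : ∀ b, 0 ≤ w b)
    (hw1 : ∀ b : Bool × Bool,
      w b / (d₁ : ℝ) ≤ w (!b.1, b.2) ∧ w (!b.1, b.2) ≤ (d₁ : ℝ) * w b)
    (hw2 : ∀ b : Bool × Bool,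
      w b / (d₂ : ℝ) ≤ w (b.1, !b.2) ∧ w (b.1, !b.2) ≤ (d₂ : ℝ) * w b)
    (α : Bool × Bool → ℝ)
    (hα : ∀ b : Bool × Bool,
      ((d₁ : ℝ) * (d₂ : ℝ)) * ∑ a : Bool × Bool,
          (if b.1 = a.1 then (d₁ : ℝ) else 1) * (if b.2 = a.2 then (d₂ : ℝ) else 1) * α a
        = (d₁ : ℝ) ^ 2 * (d₂ : ℝ) ^ 2 * w b) :
    ∀ b : Bool × Bool, α b ≤ ((d₂ : ℝ) ^ 2 / ((d₂ : ℝ) ^ 2 - 1)) * w b := by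
  have hd1 : (2:ℝ) ≤ (d₁:ℝ) := by exact_mod_cast hd₁
  have hd2 : (d₁:ℝ) ≤ (d₂:ℝ) := by exact_mod_cast hd
  have hd2' : (2:ℝ) ≤ (d₂:ℝ) := le_trans hd1 hd2
  have h1pos : (0:ℝ) < d₁ := by linarith
  have h2pos : (0:ℝ) < d₂ := by linarith
  have hsq1 : (0:ℝ) < (d₁:ℝ)^2 - 1 := by nlinarith
  have hsq2 : (0:ℝ) < (d₂:ℝ)^2 - 1 := by nlinarith
  intro b
  rw [div_mul_eq_mul_div, le_div_iff₀ hsq2]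
  obtain ⟨b1, b2⟩ := b
  have Hb := hα (b1, b2)
  have H1 := hα (!b1, b2)
  have H2 := hα (b1, !b2)
  have H12 := hα (!b1, !b2)
  simp only [Fintype.sum_prod_type, Fintype.sum_bool] at Hb H1 H2 H12
  -- lower bound: w b ≤ d₁ * w (!b1, b2)
  have k1 : w (b1, b2) ≤ (d₁:ℝ) * w (!b1, b2) := by
    have := (hw1 (b1, b2)).1
    rw [div_le_iff₀ h1pos] at this
    linarith [this]
  -- upper bound: w (!b1, !b2) ≤ d₁ * w (b1, !b2)
  have k2 : w (!b1, !b2) ≤ (d₁:ℝ) * w (b1, !b2) := by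
    have := (hw1 (b1, !b2)).2
    simpa using this
  -- key identity
  have key : (d₁:ℝ) * d₂ * (((d₁:ℝ)^2 - 1) * (((d₂:ℝ)^2 - 1) * α (b1, b2)))
      = (d₁:ℝ)^2 * (d₂:ℝ)^2 * ((d₁:ℝ) * d₂ * w (b1, b2) - (d₂:ℝ) * w (!b1, b2)
          - (d₁:ℝ) * w (b1, !b2) + w (!b1, !b2)) := by
    cases b1 <;> cases b2 <;>
      · simp only [Bool.not_true, Bool.not_false] at *
        norm_num at Hb H1 H2 H12
        linear_combination (d₁:ℝ)*d₂*Hb - d₂*H1 - d₁*H2 + H12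
  nlinarith [mul_le_mul_of_nonneg_left k1 (by positivity : (0:ℝ) ≤ (d₁:ℝ)*(d₂:ℝ)^3),
             mul_le_mul_of_nonneg_left k2 (by positivity : (0:ℝ) ≤ (d₁:ℝ)^2*(d₂:ℝ)^2),
             key, mul_pos h1pos h2pos, mul_pos (mul_pos h1pos h2pos) hsq1,
             hw0 (b1,b2)]
end
end

section
/- Let ω be a positive semidefinite operator on Â₀⊗…⊗Â_{k−1}⊗E, where each Â_i and E are finite-dimensional complex Hilbert spaces. Then for all bit strings a, c ∈ {0,1}^k: (∏_{i} |Â_i|^{¬c_i}) · Tr[(ω^{Â^{a⊕c} E})²] ≤ (∏_{i} |Â_i|) · Tr[(ω^{Â^{a} E})²], where for a bit string b, Â^b denotes the subsystem consisting of those Â_i with b_i = 1 and ω^{Â^b E} is the corresponding marginal of ω. -/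
open scoped Kronecker ComplexOrder
open MeasureTheory Matrix

noncomputable section

namespace QIT

namespace QITaux
open Matrix

lemma half_bound (z w : ℂ) : (z * (starRingEnd ℂ) w).re ≤ (Complex.normSq z + Complex.normSq w)/2 := by
  have h1 := Complex.re_le_norm (z * (starRingEnd ℂ) w)
  rw [norm_mul, Complex.norm_conj] at h1
  nlinarith [Complex.sq_norm z, Complex.sq_norm w, sq_nonneg (‖z‖ - ‖w‖),
    norm_nonneg z, norm_nonneg w]

lemma herm_apply {n : Type*} {σ : Matrix n n ℂ} (hσ : σ.IsHermitian) (x y : n) :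
    σ y x = (starRingEnd ℂ) (σ x y) := by
  have := congrFun (congrFun hσ.eq y) x
  rw [← this]
  simp [Matrix.conjTranspose_apply]

lemma trace_sq_herm_re {n : Type*} [Fintype n] (σ : Matrix n n ℂ) (hσ : σ.IsHermitian) :
    (Matrix.trace (σ * σ)).re = ∑ x, ∑ y, Complex.normSq (σ x y) := by
  rw [Matrix.trace]
  simp only [Matrix.diag, Matrix.mul_apply, Complex.re_sum]
  refine Finset.sum_congr rfl fun x _ => Finset.sum_congr rfl fun y _ => ?_
  rw [herm_apply hσ x y, Complex.mul_conj]
  simp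

lemma trace_sq_nonneg {n : Type*} [Fintype n] (σ : Matrix n n ℂ) (hσ : σ.IsHermitian) :
    0 ≤ (Matrix.trace (σ * σ)).re := by
  rw [trace_sq_herm_re σ hσ]
  exact Finset.sum_nonneg fun x _ => Finset.sum_nonneg fun y _ => Complex.normSq_nonneg _


lemma lemA {D R : Type*} [Fintype D] [Fintype R] (σ : Matrix (D × R) (D × R) ℂ)
    (hσ : σ.IsHermitian) :
    (Matrix.trace (QIT.ptL σ * QIT.ptL σ)).re ≤ (Fintype.card D : ℝ) * (Matrix.trace (σ * σ)).re := by
  classical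
  set a : D → R → R → ℝ := fun d r r' => Complex.normSq (σ (d, r) (d, r')) with ha
  have hL : (Matrix.trace (QIT.ptL σ * QIT.ptL σ)).re
      = ∑ r : R, ∑ r' : R, ∑ d : D, ∑ d' : D, (σ (d,r) (d,r') * σ (d',r') (d',r)).re := by
    rw [Matrix.trace]
    simp only [Matrix.diag, Matrix.mul_apply, QIT.ptL, Finset.sum_mul_sum, Complex.re_sum]
  have hb : ∀ (r r' : R) (d d' : D), (σ (d,r) (d,r') * σ (d',r') (d',r)).re
      ≤ (a d r r' + a d' r r')/2 := by
    intro r r' d d'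
    have h := half_bound (σ (d,r) (d,r')) (σ (d',r) (d',r'))
    rwa [← herm_apply hσ (d',r) (d',r')] at h
  have hmid : ∀ r r' : R, (∑ d : D, ∑ d' : D, (a d r r' + a d' r r')/2)
      = (Fintype.card D : ℝ) * ∑ d : D, a d r r' := by
    intro r r'
    have h1 : ∀ d : D, (∑ d' : D, (a d r r' + a d' r r')/2)
        = ((Fintype.card D : ℝ) * a d r r' + ∑ d' : D, a d' r r')/2 := by
      intro d
      rw [← Finset.sum_div, Finset.sum_add_distrib, Finset.sum_const, Finset.card_univ,
        nsmul_eq_mul]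
    calc (∑ d : D, ∑ d' : D, (a d r r' + a d' r r')/2)
        = ∑ d : D, ((Fintype.card D : ℝ) * a d r r' + ∑ d' : D, a d' r r')/2 :=
          Finset.sum_congr rfl fun d _ => h1 d
      _ = ((Fintype.card D : ℝ) * ∑ d : D, a d r r'
            + (Fintype.card D : ℝ) * ∑ d' : D, a d' r r')/2 := by
          rw [← Finset.sum_div, Finset.sum_add_distrib, ← Finset.mul_sum, Finset.sum_const,
            Finset.card_univ, nsmul_eq_mul]
      _ = (Fintype.card D : ℝ) * ∑ d : D, a d r r' := by ring
  have step1 : (Matrix.trace (QIT.ptL σ * QIT.ptL σ)).re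
      ≤ (Fintype.card D : ℝ) * ∑ r : R, ∑ r' : R, ∑ d : D, a d r r' := by
    rw [hL, Finset.mul_sum]
    refine Finset.sum_le_sum fun r _ => ?_
    rw [Finset.mul_sum]
    refine Finset.sum_le_sum fun r' _ => ?_
    rw [← hmid r r']
    exact Finset.sum_le_sum fun d _ => Finset.sum_le_sum fun d' _ => hb r r' d d'
  have hreord : (∑ r : R, ∑ r' : R, ∑ d : D, a d r r') = ∑ d : D, ∑ r : R, ∑ r' : R, a d r r' := by
    calc (∑ r : R, ∑ r' : R, ∑ d : D, a d r r')
        = ∑ r : R, ∑ d : D, ∑ r' : R, a d r r' :=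
          Finset.sum_congr rfl fun r _ => Finset.sum_comm
      _ = ∑ d : D, ∑ r : R, ∑ r' : R, a d r r' := Finset.sum_comm
  have hfin : (Matrix.trace (σ * σ)).re = ∑ d : D, ∑ r : R, ∑ d' : D, ∑ r' : R,
      Complex.normSq (σ (d,r) (d',r')) := by
    rw [trace_sq_herm_re σ hσ]
    simp only [Fintype.sum_prod_type]
  have step2 : (∑ d : D, ∑ r : R, ∑ r' : R, a d r r') ≤ (Matrix.trace (σ * σ)).re := by
    rw [hfin]
    refine Finset.sum_le_sum fun d _ => Finset.sum_le_sum fun r _ => ?_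
    refine Finset.single_le_sum (f := fun d' => ∑ r' : R, Complex.normSq (σ (d,r) (d',r')))
      (fun d' _ => Finset.sum_nonneg fun r' _ => Complex.normSq_nonneg _) (Finset.mem_univ d)
  calc (Matrix.trace (QIT.ptL σ * QIT.ptL σ)).re
      ≤ (Fintype.card D : ℝ) * ∑ r : R, ∑ r' : R, ∑ d : D, a d r r' := step1
    _ = (Fintype.card D : ℝ) * ∑ d : D, ∑ r : R, ∑ r' : R, a d r r' := by rw [hreord]
    _ ≤ (Fintype.card D : ℝ) * (Matrix.trace (σ * σ)).re := by
        refine mul_le_mul_of_nonneg_left step2 (by positivity)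


lemma sum_pair_half {D : Type*} [Fintype D] (a : D → ℝ) :
    (∑ d : D, ∑ d' : D, (a d + a d')/2) = (Fintype.card D : ℝ) * ∑ d : D, a d := by
  have h1 : ∀ d : D, (∑ d' : D, (a d + a d')/2)
      = ((Fintype.card D : ℝ) * a d + ∑ d' : D, a d')/2 := by
    intro d
    rw [← Finset.sum_div, Finset.sum_add_distrib, Finset.sum_const, Finset.card_univ,
      nsmul_eq_mul]
  calc (∑ d : D, ∑ d' : D, (a d + a d')/2)
      = ∑ d : D, ((Fintype.card D : ℝ) * a d + ∑ d' : D, a d')/2 :=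
        Finset.sum_congr rfl fun d _ => h1 d
    _ = ((Fintype.card D : ℝ) * ∑ d : D, a d
          + (Fintype.card D : ℝ) * ∑ d' : D, a d')/2 := by
        rw [← Finset.sum_div, Finset.sum_add_distrib, ← Finset.mul_sum, Finset.sum_const,
          Finset.card_univ, nsmul_eq_mul]
    _ = (Fintype.card D : ℝ) * ∑ d : D, a d := by ring

lemma traceAdj {m n : Type*} [Fintype m] [Fintype n] (M : Matrix m n ℂ) :
    (Matrix.trace (Mᴴ * M)).re = ∑ x : n, ∑ y : m, Complex.normSq (M y x) := by
  rw [Matrix.trace]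
  simp only [Matrix.diag, Matrix.mul_apply, Matrix.conjTranspose_apply, Complex.re_sum]
  refine Finset.sum_congr rfl fun x _ => Finset.sum_congr rfl fun y _ => ?_
  show ((starRingEnd ℂ) (M y x) * M y x).re = _
  rw [mul_comm, Complex.mul_conj]
  simp

lemma traceAdj_nonneg {m n : Type*} [Fintype m] [Fintype n] (M : Matrix m n ℂ) :
    0 ≤ (Matrix.trace (Mᴴ * M)).re := by
  rw [traceAdj]
  exact Finset.sum_nonneg fun x _ => Finset.sum_nonneg fun y _ => Complex.normSq_nonneg _

lemma re_trace_mul_herm_le {n : Type*} [Fintype n] (M N : Matrix n n ℂ)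
    (hM : M.IsHermitian) (hN : N.IsHermitian) :
    (Matrix.trace (M * N)).re ≤ ((Matrix.trace (M * M)).re + (Matrix.trace (N * N)).re)/2 := by
  have hexp : (Matrix.trace (M * N)).re = ∑ x, ∑ y, (M x y * (starRingEnd ℂ) (N x y)).re := by
    rw [Matrix.trace]
    simp only [Matrix.diag, Matrix.mul_apply, Complex.re_sum]
    refine Finset.sum_congr rfl fun x _ => Finset.sum_congr rfl fun y _ => ?_
    rw [herm_apply hN x y]
  rw [hexp]
  calc (∑ x, ∑ y, (M x y * (starRingEnd ℂ) (N x y)).re)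
      ≤ ∑ x, ∑ y, (Complex.normSq (M x y) + Complex.normSq (N x y))/2 :=
        Finset.sum_le_sum fun x _ => Finset.sum_le_sum fun y _ => half_bound _ _
    _ = ((∑ x, ∑ y, Complex.normSq (M x y)) + ∑ x, ∑ y, Complex.normSq (N x y))/2 := by
        simp only [← Finset.sum_div, Finset.sum_add_distrib]
    _ = ((Matrix.trace (M * M)).re + (Matrix.trace (N * N)).re)/2 := by
        rw [trace_sq_herm_re M hM, trace_sq_herm_re N hN]

lemma lemB {D R : Type*} [Fintype D] [Fintype R] (σ : Matrix (D × R) (D × R) ℂ)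
    (hσ : σ.PosSemidef) :
    (Matrix.trace (σ * σ)).re ≤ (Fintype.card D : ℝ) * (Matrix.trace (QIT.ptL σ * QIT.ptL σ)).re := by
  classical
  obtain ⟨B, hB⟩ : ∃ B : Matrix (D × R) (D × R) ℂ, σ = Bᴴ * B := by
    open scoped MatrixOrder in
    exact CStarAlgebra.nonneg_iff_eq_star_mul_self.mp hσ.nonneg
  set C : D → Matrix (D × R) R ℂ := fun d => fun w r => B w (d, r) with hC
  set X : D → D → Matrix R R ℂ := fun d d' => fun r r' => σ (d, r) (d', r') with hXdef
  have hX : ∀ d d', X d d' = (C d)ᴴ * C d' := by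
    intro d d'
    funext r r'
    simp [hXdef, hC, hB, Matrix.mul_apply, Matrix.conjTranspose_apply]
    rfl
  set G : D → Matrix (D × R) (D × R) ℂ := fun d => C d * (C d)ᴴ with hG
  have hGherm : ∀ d, (G d).IsHermitian := fun d => Matrix.isHermitian_mul_conjTranspose_self _
  have hXherm : ∀ d, (X d d).IsHermitian := by
    intro d
    funext r r'
    rw [Matrix.conjTranspose_apply]
    show (starRingEnd ℂ) (X d d r' r) = X d d r r'
    rw [hXdef]
    rw [← herm_apply hσ.1 (d, r') (d, r)]
  have idGG : ∀ d d', Matrix.trace ((X d d')ᴴ * X d d') = Matrix.trace (G d * G d') := by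
    intro d d'
    rw [hX d d', Matrix.conjTranspose_mul, Matrix.conjTranspose_conjTranspose, hG]
    rw [Matrix.mul_assoc, Matrix.trace_mul_comm]
    simp only [Matrix.mul_assoc]
  have idXX : ∀ d d', Matrix.trace (X d d * X d' d')
      = Matrix.trace ((C d' * (C d)ᴴ)ᴴ * (C d' * (C d)ᴴ)) := by
    intro d d'
    rw [hX d d, hX d' d', Matrix.conjTranspose_mul, Matrix.conjTranspose_conjTranspose]
    rw [Matrix.mul_assoc, Matrix.trace_mul_comm]
    simp only [Matrix.mul_assoc]
  -- decomposition of LHS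
  have hLHS : (Matrix.trace (σ * σ)).re
      = ∑ d : D, ∑ d' : D, (Matrix.trace ((X d d')ᴴ * X d d')).re := by
    rw [trace_sq_herm_re σ hσ.1]
    simp only [Fintype.sum_prod_type]
    refine Finset.sum_congr rfl fun d _ => ?_
    rw [Finset.sum_comm]
    refine Finset.sum_congr rfl fun d' _ => ?_
    rw [traceAdj (X d d')]
    exact Finset.sum_comm
  -- decomposition of RHS
  have hQIT.ptL : QIT.ptL σ = ∑ d : D, X d d := by
    funext r r'
    simp [QIT.ptL, hXdef, Matrix.sum_apply]
    exact (Matrix.sum_apply r r' Finset.univ (fun d => X d d)).symm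
  have hRHS : (Matrix.trace (QIT.ptL σ * QIT.ptL σ)).re
      = ∑ d : D, ∑ d' : D, (Matrix.trace (X d d * X d' d')).re := by
    rw [hQIT.ptL, Finset.sum_mul_sum]
    rw [Matrix.trace_sum, Complex.re_sum]
    refine Finset.sum_congr rfl fun d _ => ?_
    rw [Matrix.trace_sum, Complex.re_sum]
  rw [hLHS, hRHS]
  have step1 : (∑ d : D, ∑ d' : D, (Matrix.trace ((X d d')ᴴ * X d d')).re)
      ≤ (Fintype.card D : ℝ) * ∑ d : D, (Matrix.trace (G d * G d)).re := by
    rw [← sum_pair_half (fun d => (Matrix.trace (G d * G d)).re)]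
    refine Finset.sum_le_sum fun d _ => Finset.sum_le_sum fun d' _ => ?_
    rw [idGG d d']
    exact re_trace_mul_herm_le (G d) (G d') (hGherm d) (hGherm d')
  refine step1.trans (mul_le_mul_of_nonneg_left ?_ (by positivity))
  have hdiag : ∀ d, (Matrix.trace (G d * G d)).re = (Matrix.trace (X d d * X d d)).re := by
    intro d
    rw [← idGG d d, (hXherm d).eq]
  refine (Finset.sum_le_sum fun d (_ : d ∈ Finset.univ) => (hdiag d).le).trans ?_
  refine Finset.sum_le_sum fun d _ => ?_
  have h0 : ∀ d' ∈ Finset.univ, 0 ≤ (Matrix.trace (X d d * X d' d')).re := by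
    intro d' _
    rw [idXX d d']
    exact traceAdj_nonneg _
  exact Finset.single_le_sum h0 (Finset.mem_univ d)

section Transport

variable {k : ℕ} {A : Fin k → Type*} [∀ i, Fintype (A i)] [∀ i, DecidableEq (A i)]
  {E : Type*} [Fintype E]

/-- split a `d`-assignment into a `b`-assignment and a difference assignment. -/
def eSplit (b d : Fin k → Bool) (hbd : ∀ i, b i = true → d i = true) :
    ((i : {i // d i = true}) → A i.1) ≃
      (((i : {i // b i = true}) → A i.1) × ((i : {i // d i = true ∧ b i = false}) → A i.1)) where
  toFun F := (fun i => F ⟨i.1, hbd i.1 i.2⟩, fun i => F ⟨i.1, i.2.1⟩)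
  invFun fh i :=
    if h : b i.1 = true then fh.1 ⟨i.1, h⟩
    else fh.2 ⟨i.1, ⟨i.2, Bool.eq_false_iff.mpr h⟩⟩
  left_inv F := by
    funext i
    dsimp only
    split_ifs with h
    · rfl
    · rfl
  right_inv fh := by
    refine Prod.ext ?_ ?_ <;> funext i <;> dsimp only
    · rw [dif_pos i.2]
    · rw [dif_neg (by simp [i.2.2])]

/-- split a `¬b`-assignment into a difference assignment and a `¬d`-assignment. -/
def eCo (b d : Fin k → Bool) (hbd : ∀ i, b i = true → d i = true) :
    ((i : {i // b i = false}) → A i.1) ≃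
      (((i : {i // d i = true ∧ b i = false}) → A i.1) × ((i : {i // d i = false}) → A i.1)) where
  toFun G := (fun i => G ⟨i.1, i.2.2⟩,
    fun i => G ⟨i.1, Bool.eq_false_iff.mpr (fun h => absurd (hbd i.1 h) (by simp [i.2]))⟩)
  invFun hg i :=
    if h : d i.1 = true then hg.1 ⟨i.1, h, i.2⟩
    else hg.2 ⟨i.1, Bool.eq_false_iff.mpr h⟩
  left_inv G := by
    funext i
    dsimp only
    split_ifs with h
    · rfl
    · rfl
  right_inv hg := by
    refine Prod.ext ?_ ?_ <;> funext i <;> dsimp only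
    · rw [dif_pos i.2.1]
    · rw [dif_neg (by simp [i.2])]

lemma bmerge_compat (b d : Fin k → Bool) (hbd : ∀ i, b i = true → d i = true)
    (f : (i : {i // b i = true}) → A i.1)
    (h : (i : {i // d i = true ∧ b i = false}) → A i.1)
    (g₀ : (i : {i // d i = false}) → A i.1) :
    QIT.bmerge b f ((eCo b d hbd).symm (h, g₀))
      = QIT.bmerge d ((eSplit (A := A) b d hbd).symm (f, h)) g₀ := by
  funext i
  simp only [QIT.bmerge, eCo, eSplit, Equiv.coe_fn_symm_mk]
  by_cases hb : b i = true
  · rw [dif_pos hb, dif_pos (hbd i hb), dif_pos hb]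
  · rw [dif_neg hb]
    by_cases hd : d i = true
    · rw [dif_pos hd, dif_pos hd, dif_neg hb]
    · rw [dif_neg hd, dif_neg hd]

lemma margB_posSemidef (ω : Matrix ((∀ i, A i) × E) ((∀ i, A i) × E) ℂ) (hω : ω.PosSemidef)
    (b : Fin k → Bool) : (QIT.margB b ω).PosSemidef := by
  classical
  have hrw : QIT.margB b ω = ∑ g : (i : {i // b i = false}) → A i.1,
      ω.submatrix (fun p => (QIT.bmerge b p.1 g, p.2)) (fun p => (QIT.bmerge b p.1 g, p.2)) := by
    funext p q
    simp [QIT.margB, Matrix.sum_apply, Matrix.submatrix_apply]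
  rw [hrw]
  refine Finset.sum_induction _ _ (fun x y hx hy => hx.add hy) Matrix.PosSemidef.zero
    (fun g _ => hω.submatrix _)

lemma trace_submatrix_eq {m n : Type*} [Fintype m] [Fintype n] (e : m ≃ n)
    (M : Matrix n n ℂ) : (M.submatrix e e).trace = M.trace := by
  rw [Matrix.trace, Matrix.trace]
  exact Equiv.sum_comp e fun x => M x x

lemma margB_transport (ω : Matrix ((∀ i, A i) × E) ((∀ i, A i) × E) ℂ) (hω : ω.PosSemidef)
    (b d : Fin k → Bool) (hbd : ∀ i, b i = true → d i = true) :
    (Matrix.trace (QIT.margB b ω * QIT.margB b ω)).re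
      ≤ (∏ i, if d i = true ∧ b i = false then (Fintype.card (A i) : ℝ) else 1) *
        (Matrix.trace (QIT.margB d ω * QIT.margB d ω)).re
    ∧ (Matrix.trace (QIT.margB d ω * QIT.margB d ω)).re
      ≤ (∏ i, if d i = true ∧ b i = false then (Fintype.card (A i) : ℝ) else 1) *
        (Matrix.trace (QIT.margB b ω * QIT.margB b ω)).re := by
  classical
  let ΔA := ((i : {i // d i = true ∧ b i = false}) → A i.1)
  let bA := ((i : {i // b i = true}) → A i.1)
  let ψ : (ΔA × (bA × E)) ≃ (((i : {i // d i = true}) → A i.1) × E) :=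
    { toFun := fun p => ((eSplit b d hbd).symm (p.2.1, p.1), p.2.2)
      invFun := fun q => (((eSplit b d hbd) q.1).2, (((eSplit b d hbd) q.1).1, q.2))
      left_inv := fun p => by simp
      right_inv := fun q => by simp }
  set σ' : Matrix (ΔA × (bA × E)) (ΔA × (bA × E)) ℂ := (QIT.margB d ω).submatrix ψ ψ with hσ'
  have hpsd : σ'.PosSemidef := (margB_posSemidef ω hω d).submatrix ψ
  have hpt : QIT.ptL σ' = QIT.margB b ω := by
    funext p q
    show (∑ h : ΔA, σ' (h, p) (h, q)) = _
    have h1 : ∀ h : ΔA, σ' (h, p) (h, q)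
        = ∑ g₀ : (i : {i // d i = false}) → A i.1,
            ω (QIT.bmerge b p.1 ((eCo b d hbd).symm (h, g₀)), p.2)
              (QIT.bmerge b q.1 ((eCo b d hbd).symm (h, g₀)), q.2) := by
      intro h
      show QIT.margB d ω ((eSplit b d hbd).symm (p.1, h), p.2)
          ((eSplit b d hbd).symm (q.1, h), q.2) = _
      refine Finset.sum_congr rfl fun g₀ _ => ?_
      rw [bmerge_compat b d hbd p.1 h g₀, bmerge_compat b d hbd q.1 h g₀]
    rw [Finset.sum_congr rfl fun h _ => h1 h]
    show _ = ∑ g : (i : {i // b i = false}) → A i.1,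
        ω (QIT.bmerge b p.1 g, p.2) (QIT.bmerge b q.1 g, q.2)
    rw [← Equiv.sum_comp (eCo (A := A) b d hbd).symm
      (fun g => ω (QIT.bmerge b p.1 g, p.2) (QIT.bmerge b q.1 g, q.2))]
    rw [Fintype.sum_prod_type]
  have htr : Matrix.trace (σ' * σ') = Matrix.trace (QIT.margB d ω * QIT.margB d ω) := by
    rw [hσ', Matrix.submatrix_mul_equiv (QIT.margB d ω) (QIT.margB d ω) ψ ψ ψ]
    exact trace_submatrix_eq ψ _
  have hcard : (Fintype.card ΔA : ℝ)
      = ∏ i, if d i = true ∧ b i = false then (Fintype.card (A i) : ℝ) else 1 := by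
    rw [show (Fintype.card ΔA : ℝ) = ((∏ i : {i // d i = true ∧ b i = false}, Fintype.card (A i.1) : ℕ) : ℝ) from by rw [Fintype.card_pi]]
    push_cast
    rw [← Finset.prod_filter (fun i => d i = true ∧ b i = false)
      (fun i => (Fintype.card (A i) : ℝ))]
    exact (Finset.prod_subtype
      (Finset.univ.filter (fun i => d i = true ∧ b i = false))
      (fun x => by simp) (fun i => (Fintype.card (A i) : ℝ))).symm
  constructor
  · have h := lemA σ' hpsd.1
    rwa [hpt, htr, hcard] at h
  · have h := lemB σ' hpsd
    rwa [hpt, htr, hcard] at h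

end Transport

end QITaux

end QIT
open QIT in
/-- For a positive semidefinite `ω` on `Â₀⊗…⊗Â_{k−1}⊗E` and bit strings
`a, c ∈ {0,1}^k`:
`(∏ᵢ |Âᵢ|^{¬cᵢ}) · Tr[(ω^{Â^{a⊕c}E})²] ≤ (∏ᵢ |Âᵢ|) · Tr[(ω^{Â^{a}E})²]`. -/
theorem marginal_purity_bitstring {k : ℕ} {A : Fin k → Type*} [∀ i, Fintype (A i)]
    [∀ i, DecidableEq (A i)] {E : Type*} [Fintype E]
    (ω : Matrix ((∀ i, A i) × E) ((∀ i, A i) × E) ℂ) (hω : ω.PosSemidef)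
    (a c : Fin k → Bool) :
    (∏ i, if c i then (1 : ℝ) else (Fintype.card (A i) : ℝ)) *
        (Matrix.trace (margB (fun i => xor (a i) (c i)) ω *
          margB (fun i => xor (a i) (c i)) ω)).re
      ≤ (∏ i, (Fintype.card (A i) : ℝ)) * (Matrix.trace (margB a ω * margB a ω)).re := by
  classical
  have h1 : ∀ i, (fun i => xor (a i) (c i)) i = true → (fun i => a i || c i) i = true := by
    intro i
    cases ha : a i <;> cases hc : c i <;> simp [ha, hc]
  have h2 : ∀ i, a i = true → (fun i => a i || c i) i = true := by
    intro i h
    simp [h]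
  obtain ⟨hA1, -⟩ := QIT.QITaux.margB_transport ω hω (fun i => xor (a i) (c i))
    (fun i => a i || c i) h1
  obtain ⟨-, hB2⟩ := QIT.QITaux.margB_transport ω hω a (fun i => a i || c i) h2
  set Q : ℝ := ∏ i, if c i then (1 : ℝ) else (Fintype.card (A i) : ℝ) with hQdef
  set P1 : ℝ := ∏ i, if (a i || c i) = true ∧ (xor (a i) (c i)) = false
    then (Fintype.card (A i) : ℝ) else 1 with hP1def
  set P2 : ℝ := ∏ i, if (a i || c i) = true ∧ a i = false
    then (Fintype.card (A i) : ℝ) else 1 with hP2def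
  have hQ0 : 0 ≤ Q := Finset.prod_nonneg fun i _ => by positivity
  have hP10 : 0 ≤ P1 := Finset.prod_nonneg fun i _ => by positivity
  have hprod : Q * (P1 * P2) = ∏ i, (Fintype.card (A i) : ℝ) := by
    rw [hQdef, hP1def, hP2def, ← Finset.prod_mul_distrib, ← Finset.prod_mul_distrib]
    refine Finset.prod_congr rfl fun i _ => ?_
    cases ha : a i <;> cases hc : c i <;> simp [ha, hc]
  calc Q * (Matrix.trace (margB (fun i => xor (a i) (c i)) ω *
          margB (fun i => xor (a i) (c i)) ω)).re
      ≤ Q * (P1 * (Matrix.trace (margB (fun i => a i || c i) ω *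
          margB (fun i => a i || c i) ω)).re) := by
        refine mul_le_mul_of_nonneg_left ?_ hQ0
        exact hA1
    _ ≤ Q * (P1 * (P2 * (Matrix.trace (margB a ω * margB a ω)).re)) := by
        refine mul_le_mul_of_nonneg_left (mul_le_mul_of_nonneg_left ?_ hP10) hQ0
        exact hB2
    _ = (∏ i, (Fintype.card (A i) : ℝ)) * (Matrix.trace (margB a ω * margB a ω)).re := by
        rw [← hprod]
        ring
end
end
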